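/- Let B : [0,∞) → ℝ be measurable such that the function x ↦ B(|x|) on ℝ² is locally square integrable (equivalently, s ↦ B(s)² s is integrable on (0, R) for every R > 0). Then the function x ↦ Φ(|x|)/|x| on ℝ² \ {0} is locally square integrable, i.e. for every R > 0 one has ∫_{|x| ≤ R} (Φ(|x|)/|x|)² dx < ∞. In particular, the Poincaré-gauge magnetic vector potential A(x) = (Φ(|x|)/|x|²) · (−x₂, x₁) belongs to L²_loc(ℝ², ℝ²). -/

import Mathlib

open MeasureTheory

/-- If the radial magnetic field `B` is measurable and `x ↦ B(|x|)` is locally square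
integrable on `ℝ²` (equivalently, `s ↦ B(s)² s` is integrable on `(0,R)` for every `R > 0`),
then `x ↦ Φ(|x|)/|x|` is locally square integrable, where `Φ(r) = ∫₀^r B(s) s ds` is the
magnetic flux.  In particular, the Poincaré-gauge vector potential
`A(x) = (Φ(|x|)/|x|²) (−x₂, x₁)` is in `L²_loc(ℝ², ℝ²)`. -/
theorem poincare_gauge_locally_square_integrable (B : ℝ → ℝ) (hB : Measurable B)
    (hint : ∀ R > (0 : ℝ), IntegrableOn (fun s => B s ^ 2 * s) (Set.Ioo 0 R)) :
    (∀ R > (0 : ℝ), IntegrableOn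
        (fun x : EuclideanSpace ℝ (Fin 2) =>
          ((∫ s in Set.Ioo (0 : ℝ) ‖x‖, B s * s) / ‖x‖) ^ 2)
        {x | ‖x‖ ≤ R}) ∧
    (∀ R > (0 : ℝ), IntegrableOn
        (fun x : EuclideanSpace ℝ (Fin 2) =>
          ‖((∫ s in Set.Ioo (0 : ℝ) ‖x‖, B s * s) / ‖x‖ ^ 2) •
              ((WithLp.equiv 2 (Fin 2 → ℝ)).symm ![-(x 1), x 0])‖ ^ 2)
        {x | ‖x‖ ≤ R}) := by
  set f : ℝ → ℝ := fun s => B s * s with hf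
  set ftil : ℝ → ℝ := fun s => if 0 < s then B s * s else 0 with hftil
  have hid : ∀ R : ℝ, IntegrableOn (fun s : ℝ => s) (Set.Ioo 0 R) := fun R =>
    ((continuous_id (X:=ℝ)).integrableOn_Icc (μ := volume)).mono_set Set.Ioo_subset_Icc_self
  -- f is integrable on Ioo 0 R for every R
  have hfi : ∀ R : ℝ, IntegrableOn f (Set.Ioo 0 R) := by
    intro R
    rcases le_or_gt R 0 with hR | hR
    · rw [Set.Ioo_eq_empty (by linarith)]
      exact integrableOn_empty
    · have hmono : IntegrableOn (fun s => (B s ^ 2 * s + s) / 2) (Set.Ioo 0 R) :=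
        ((hint R hR).add (hid R)).div_const 2
      refine Integrable.mono' hmono ((hB.mul measurable_id).aestronglyMeasurable) ?_
      filter_upwards [ae_restrict_mem measurableSet_Ioo] with s hs
      have hs0 : 0 < s := hs.1
      have h2 : |B s| * s ≤ (B s ^ 2 * s + s) / 2 := by
        nlinarith [mul_nonneg hs0.le (sq_nonneg (|B s| - 1)), sq_abs (B s)]
      calc ‖f s‖ = |B s| * s := by
            rw [hf]; simp [abs_mul, abs_of_pos hs0]
        _ ≤ _ := h2
  -- ftil is interval integrable everywhere
  have hftil_ii : ∀ a b : ℝ, IntervalIntegrable ftil volume a b := by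
    intro a b
    rw [intervalIntegrable_iff]
    have hsub : Set.uIoc a b ⊆ Set.Iic 0 ∪ Set.Ioo 0 (max |a| |b| + 1) := by
      intro s hs
      rcases le_or_gt s 0 with h | h
      · exact Or.inl h
      · refine Or.inr ⟨h, ?_⟩
        have hb : s ≤ max |a| |b| :=
          le_trans hs.2 (max_le_max (le_abs_self a) (le_abs_self b))
        linarith
    refine IntegrableOn.mono_set ?_ hsub
    refine IntegrableOn.union ?_ ?_
    · refine (integrableOn_zero).congr_fun ?_ measurableSet_Iic
      intro s hs
      have : ¬ (0 < s) := not_lt.mpr (Set.mem_Iic.mp hs)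
      simp [hftil, this]
    · refine ((hfi (max |a| |b| + 1))).congr_fun ?_ measurableSet_Ioo
      intro s hs; simp [hftil, hf, hs.1]
  -- the flux as a continuous function
  have hcont : Continuous fun r => ∫ t in (0:ℝ)..r, ftil t :=
    intervalIntegral.continuous_primitive hftil_ii 0
  have hPhi_eq : ∀ r : ℝ, (∫ s in Set.Ioo (0:ℝ) r, f s) = ∫ t in (0:ℝ)..r, ftil t := by
    intro r
    rcases le_or_gt r 0 with hr | hr
    · rw [Set.Ioo_eq_empty (by simpa using not_lt.mpr hr)]
      rw [setIntegral_empty]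
      rw [intervalIntegral.integral_symm]
      rw [intervalIntegral.integral_of_le hr]
      rw [setIntegral_congr_fun measurableSet_Ioc (g := fun _ => (0:ℝ))
        (fun s hs => by simp [hftil, not_lt.mpr hs.2])]
      simp
    · rw [intervalIntegral.integral_of_le hr.le, integral_Ioc_eq_integral_Ioo]
      exact (setIntegral_congr_fun measurableSet_Ioo (fun s hs => by simp [hftil, hf, hs.1])).symm
  have hPhi_cont : Continuous fun r : ℝ => ∫ s in Set.Ioo (0:ℝ) r, f s := by
    simpa only [← hPhi_eq] using hcont
  -- key bound
  have key : ∀ R > (0:ℝ), ∀ r, 0 ≤ r → r ≤ R →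
      |(∫ s in Set.Ioo (0:ℝ) r, f s) / r| ≤ ((∫ s in Set.Ioo (0:ℝ) R, B s ^ 2 * s) + 1/2) / 2 := by
    intro R hR r hr0 hrR
    set M := (∫ s in Set.Ioo (0:ℝ) R, B s ^ 2 * s) with hM
    have hM0 : 0 ≤ M := setIntegral_nonneg measurableSet_Ioo
      (fun s hs => mul_nonneg (sq_nonneg _) hs.1.le)
    rcases eq_or_lt_of_le hr0 with h0 | h0
    · simp [← h0, Set.Ioo_self]
      positivity
    -- pointwise bound on Ioo 0 r
    have hbound : ∀ s ∈ Set.Ioo (0:ℝ) r, ‖f s‖ ≤ (r * (B s ^ 2 * s) + s / r) / 2 := by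
      intro s hs
      have hs0 : 0 < s := hs.1
      have h1 : ‖f s‖ = |B s| * s := by rw [hf]; simp [abs_mul, abs_of_pos hs0]
      rw [h1, le_div_iff₀ (by norm_num : (0:ℝ) < 2), ← sub_nonneg]
      have habs : |B s| ^ 2 = B s ^ 2 := sq_abs _
      have heq : r * (B s ^ 2 * s) + s / r - |B s| * s * 2
          = s / r * (r * |B s| - 1) ^ 2 := by
        field_simp
        ring_nf
        rw [habs]
      rw [heq]
      positivity
    have hint_r : IntegrableOn (fun s => B s ^ 2 * s) (Set.Ioo 0 r) :=
      (hint R hR).mono_set (Set.Ioo_subset_Ioo le_rfl hrR)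
    have hbig : IntegrableOn (fun s => (r * (B s ^ 2 * s) + s / r) / 2) (Set.Ioo 0 r) :=
      ((hint_r.const_mul r).add ((hid r).div_const r)).div_const 2
    have h2 : |∫ s in Set.Ioo (0:ℝ) r, f s|
        ≤ ∫ s in Set.Ioo (0:ℝ) r, (r * (B s ^ 2 * s) + s / r) / 2 := by
      refine (norm_integral_le_integral_norm f).trans ?_
      exact setIntegral_mono_on ((hfi r).norm) hbig measurableSet_Ioo hbound
    have h3 : (∫ s in Set.Ioo (0:ℝ) r, (r * (B s ^ 2 * s) + s / r) / 2)
        = (r * (∫ s in Set.Ioo (0:ℝ) r, B s ^ 2 * s) + (∫ s in Set.Ioo (0:ℝ) r, s) / r) / 2 := by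
      rw [integral_div, integral_add (hint_r.const_mul r) ((hid r).div_const r),
        integral_const_mul, integral_div]
    have h4 : (∫ s in Set.Ioo (0:ℝ) r, s) = r ^ 2 / 2 := by
      rw [← integral_Ioc_eq_integral_Ioo, ← intervalIntegral.integral_of_le hr0]
      simp [integral_id]
    have h5 : (∫ s in Set.Ioo (0:ℝ) r, B s ^ 2 * s) ≤ M := by
      refine setIntegral_mono_set (hint R hR) ?_ ?_
      · filter_upwards [ae_restrict_mem measurableSet_Ioo] with s hs
        exact mul_nonneg (sq_nonneg _) hs.1.le
      · exact Filter.Eventually.of_forall (Set.Ioo_subset_Ioo le_rfl hrR)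
    have h6 : |∫ s in Set.Ioo (0:ℝ) r, f s| ≤ r * ((M + 1/2) / 2) := by
      rw [h3, h4] at h2
      calc |∫ s in Set.Ioo (0:ℝ) r, f s|
          ≤ (r * (∫ s in Set.Ioo (0:ℝ) r, B s ^ 2 * s) + r ^ 2 / 2 / r) / 2 := h2
        _ ≤ (r * M + r / 2) / 2 := by
            have hrr : r ^ 2 / 2 / r = r / 2 := by
              field_simp
            rw [hrr]
            have := mul_le_mul_of_nonneg_left h5 h0.le
            linarith
        _ = r * ((M + 1/2) / 2) := by ring
    rw [abs_div, abs_of_pos h0, div_le_iff₀ h0]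
    linarith [h6]
  -- first part
  have part1 : ∀ R > (0 : ℝ), IntegrableOn
      (fun x : EuclideanSpace ℝ (Fin 2) =>
        ((∫ s in Set.Ioo (0 : ℝ) ‖x‖, B s * s) / ‖x‖) ^ 2) {x | ‖x‖ ≤ R} := by
    intro R hR
    have hset : {x : EuclideanSpace ℝ (Fin 2) | ‖x‖ ≤ R} = Metric.closedBall 0 R := by
      ext x; simp [Metric.mem_closedBall, dist_zero_right]
    set C := ((∫ s in Set.Ioo (0:ℝ) R, B s ^ 2 * s) + 1/2) / 2 with hC
    have hmeas : AEStronglyMeasurable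
        (fun x : EuclideanSpace ℝ (Fin 2) =>
          ((∫ s in Set.Ioo (0 : ℝ) ‖x‖, B s * s) / ‖x‖) ^ 2)
        (volume.restrict {x | ‖x‖ ≤ R}) :=
      Measurable.aestronglyMeasurable
        (((hPhi_cont.measurable.comp measurable_norm).div measurable_norm).pow_const 2)
    refine Integrable.mono' (g := fun _ => C ^ 2) ?_ hmeas ?_
    · rw [hset]
      exact integrableOn_const measure_closedBall_lt_top.ne
    · have hSmeas : MeasurableSet {x : EuclideanSpace ℝ (Fin 2) | ‖x‖ ≤ R} := by
        rw [hset]; exact measurableSet_closedBall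
      rw [ae_restrict_iff' hSmeas]
      refine Filter.Eventually.of_forall fun x hx => ?_
      have hb := key R hR ‖x‖ (norm_nonneg x) hx
      calc ‖((∫ s in Set.Ioo (0 : ℝ) ‖x‖, B s * s) / ‖x‖) ^ 2‖
          = |(∫ s in Set.Ioo (0 : ℝ) ‖x‖, B s * s) / ‖x‖| ^ 2 := by
            rw [Real.norm_eq_abs, abs_pow]
        _ ≤ C ^ 2 := pow_le_pow_left₀ (abs_nonneg _) hb 2
  refine ⟨part1, ?_⟩
  -- second part
  intro R hR
  refine (part1 R hR).congr_fun ?_ (by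
    have h : {x : EuclideanSpace ℝ (Fin 2) | ‖x‖ ≤ R} = Metric.closedBall 0 R := by
      ext x; simp [Metric.mem_closedBall, dist_zero_right]
    rw [h]; exact measurableSet_closedBall)
  intro x _
  have hv : ‖((WithLp.equiv 2 (Fin 2 → ℝ)).symm ![-(x 1), x 0])‖ = ‖x‖ := by
    rw [EuclideanSpace.norm_eq, EuclideanSpace.norm_eq]
    congr 1
    simp [Fin.sum_univ_two]
    ring
  simp only [norm_smul, hv, Real.norm_eq_abs]
  rcases eq_or_ne ‖x‖ 0 with h0 | h0
  · simp [h0]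
  · rw [mul_pow, sq_abs, div_pow, div_pow]
    field_simp
    ring
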